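/- arXiv:1503.04639 — 2 statements merged into one kernel-verified Lean document; each statement's English description precedes it below -/
import Mathlib

section
/- Let A be a finite dimensional algebra over an algebraically closed field K, let W be a wide subcategory of mod(A), let W be an object of W and let g: Y → W be a morphism with Y in gen(W). Then ker(g) belongs to gen(W). -/
open CategoryTheory

section Defs

variable (K : Type) [Field K] (A : Type) [Ring A] [Algebra K A]

/-- An `A`-module is in `mod(A)` if it is finite dimensional over `K`
(via restriction of scalars along `K → A`). -/
def modCls : Set (ModuleCat A) :=
  {M | @FiniteDimensional K (RestrictScalars K A M) _ _ (RestrictScalars.module K A M)}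

variable {A}

/-- A class of modules is replete (closed under isomorphisms). -/
def IsoClosed (C : Set (ModuleCat A)) : Prop :=
  ∀ ⦃M N : ModuleCat A⦄, (M ≅ N) → M ∈ C → N ∈ C

/-- Closed under quotients. -/
def QuotClosed (C : Set (ModuleCat A)) : Prop :=
  ∀ ⦃M N : ModuleCat A⦄ (f : M ⟶ N), Function.Surjective f → M ∈ C → N ∈ C

/-- Closed under extensions. -/
def ExtClosed (C : Set (ModuleCat A)) : Prop :=
  ∀ ⦃M E N : ModuleCat A⦄ (f : M ⟶ E) (g : E ⟶ N),
    Function.Injective f → Function.Surjective g → Function.Exact f g →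
    M ∈ C → N ∈ C → E ∈ C

/-- Closed under kernels. -/
def KerClosed (C : Set (ModuleCat A)) : Prop :=
  ∀ ⦃M N : ModuleCat A⦄ (f : M ⟶ N), M ∈ C → N ∈ C →
    ModuleCat.of A ↥(LinearMap.ker f.hom) ∈ C

/-- Closed under cokernels. -/
def CokerClosed (C : Set (ModuleCat A)) : Prop :=
  ∀ ⦃M N : ModuleCat A⦄ (f : M ⟶ N), M ∈ C → N ∈ C →
    ModuleCat.of A (N ⧸ LinearMap.range f.hom) ∈ C

variable (A)

/-- A wide subcategory of `mod(A)`: a replete class of finite dimensional modules closed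
under kernels, cokernels and extensions. -/
def IsWide (C : Set (ModuleCat A)) : Prop :=
  C ⊆ modCls K A ∧ IsoClosed C ∧ KerClosed C ∧ CokerClosed C ∧ ExtClosed C

/-- A torsion class in `mod(A)`: a replete class of finite dimensional modules closed
under quotients and extensions. -/
def IsTorsionClass (C : Set (ModuleCat A)) : Prop :=
  C ⊆ modCls K A ∧ IsoClosed C ∧ QuotClosed C ∧ ExtClosed C

variable {A}

/-- `gen C`: all quotients of finite direct sums of objects of `C`. -/
def gen (C : Set (ModuleCat A)) : Set (ModuleCat A) :=
  {X | ∃ (n : ℕ) (M : Fin n → ModuleCat A) (_ : ∀ i, M i ∈ C)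
      (f : ModuleCat.of A (∀ i, M i) ⟶ X), Function.Surjective f}

/-- Modules admitting a `C`-filtration `0 = F 0 ⊆ F 1 ⊆ ⋯ ⊆ F n = X` of length exactly `n`,
with all subquotients `F (i+1) / F i` in `C`. -/
def filtLen (C : Set (ModuleCat A)) (n : ℕ) : Set (ModuleCat A) :=
  {X | ∃ F : Fin (n + 1) → Submodule A X,
      Monotone F ∧ F 0 = ⊥ ∧ F (Fin.last n) = ⊤ ∧
      ∀ i : Fin n, ModuleCat.of A
        (↥(F i.succ) ⧸ Submodule.comap (F i.succ).subtype (F i.castSucc)) ∈ C}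

/-- `filt C`: all modules admitting a finite filtration with subquotients in `C`. -/
def filt (C : Set (ModuleCat A)) : Set (ModuleCat A) :=
  {X | ∃ n, X ∈ filtLen C n}

/-- `C^{⋆n}`: modules with a `C`-filtration of length at most `n`. -/
def filtAtMost (C : Set (ModuleCat A)) (n : ℕ) : Set (ModuleCat A) :=
  {X | ∃ m ≤ n, X ∈ filtLen C m}

/-- `α(T)`: the modules `X ∈ T` such that for every map `g : Y → X` with `Y ∈ T`,
the kernel of `g` is again in `T`. -/
def alpha (T : Set (ModuleCat A)) : Set (ModuleCat A) :=
  {X | X ∈ T ∧ ∀ ⦃Y : ModuleCat A⦄ (g : Y ⟶ X), Y ∈ T →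
      ModuleCat.of A ↥(LinearMap.ker g.hom) ∈ T}

/-- `g : X ⟶ C₁` is a left `C`-approximation of `X`. -/
def IsLeftApprox (C : Set (ModuleCat A)) {X C₁ : ModuleCat A} (g : X ⟶ C₁) : Prop :=
  C₁ ∈ C ∧ ∀ ⦃C' : ModuleCat A⦄ (h : X ⟶ C'), C' ∈ C → ∃ k : C₁ ⟶ C', g ≫ k = h

/-- `g : C₂ ⟶ X` is a right `C`-approximation of `X`. -/
def IsRightApprox (C : Set (ModuleCat A)) {C₂ X : ModuleCat A} (g : C₂ ⟶ X) : Prop :=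
  C₂ ∈ C ∧ ∀ ⦃C' : ModuleCat A⦄ (h : C' ⟶ X), C' ∈ C → ∃ k : C' ⟶ C₂, k ≫ g = h

/-- A left approximation is (left) minimal if every endomorphism compatible with it is an
isomorphism. -/
def IsMinimalLeftApprox (C : Set (ModuleCat A)) {X C₁ : ModuleCat A} (g : X ⟶ C₁) : Prop :=
  IsLeftApprox C g ∧ ∀ h : C₁ ⟶ C₁, g ≫ h = g → IsIso h

variable (A)

/-- A class `C` is functorially finite in `mod(A)` if every finite dimensional module has
both a left and a right `C`-approximation. -/
def FunctFinite (C : Set (ModuleCat A)) : Prop :=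
  ∀ X ∈ modCls K A, (∃ (C₁ : ModuleCat A) (g : X ⟶ C₁), IsLeftApprox C g) ∧
    (∃ (C₂ : ModuleCat A) (g : C₂ ⟶ X), IsRightApprox C g)

variable {A}

/-- `add M`: direct summands of finite direct sums of copies of `M`. -/
def addOf (M : ModuleCat A) : Set (ModuleCat A) :=
  {X | ∃ (n : ℕ) (i : X ⟶ ModuleCat.of A (Fin n → M)) (r : ModuleCat.of A (Fin n → M) ⟶ X),
      i ≫ r = 𝟙 X}

/-- `gen M`: quotients of finite direct sums of copies of `M`. -/
def genOf (M : ModuleCat A) : Set (ModuleCat A) :=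
  {X | ∃ (n : ℕ) (f : ModuleCat.of A (Fin n → M) ⟶ X), Function.Surjective f}

/-- `P` is split projective in `C`: `P ∈ C` and every epimorphism onto `P` from an
object of `C` splits. -/
def SplitProjIn (C : Set (ModuleCat A)) (P : ModuleCat A) : Prop :=
  P ∈ C ∧ ∀ ⦃M : ModuleCat A⦄ (f : M ⟶ P), M ∈ C → Function.Surjective f →
    ∃ s : P ⟶ M, s ≫ f = 𝟙 P

end Defs


lemma zero_mem_of_wide {K : Type} [Field K] {A : Type} [Ring A] [Algebra K A]
    {W : Set (ModuleCat A)} (hW : IsWide K A W) {W₀ : ModuleCat A} (hW₀ : W₀ ∈ W)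
    (Z : ModuleCat A) [Subsingleton Z] : Z ∈ W := by
  have hk : ModuleCat.of A ↥(LinearMap.ker (ModuleCat.Hom.hom (𝟙 W₀))) ∈ W :=
    hW.2.2.1 (𝟙 W₀) hW₀ hW₀
  haveI : Subsingleton ↥(LinearMap.ker (ModuleCat.Hom.hom (𝟙 W₀))) := by
    constructor
    rintro ⟨x, hx⟩ ⟨y, hy⟩
    simp only [LinearMap.mem_ker, ModuleCat.hom_id, LinearMap.id_apply] at hx hy
    exact Subtype.ext (hx.trans hy.symm)
  refine hW.2.1 (M := ModuleCat.of A ↥(LinearMap.ker (ModuleCat.Hom.hom (𝟙 W₀)))) ?_ hk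
  refine LinearEquiv.toModuleIso
    { toFun := fun _ => 0, invFun := fun _ => 0,
      map_add' := by intros; simp, map_smul' := by intros; simp,
      left_inv := fun x => Subsingleton.elim _ _,
      right_inv := fun x => Subsingleton.elim _ _ }

lemma pi_mem_of_wide {K : Type} [Field K] {A : Type} [Ring A] [Algebra K A]
    {W : Set (ModuleCat A)} (hW : IsWide K A W) {W₀ : ModuleCat A} (hW₀ : W₀ ∈ W) :
    ∀ (n : ℕ) (M : Fin n → ModuleCat A), (∀ i, M i ∈ W) →
      ModuleCat.of A (∀ i, M i) ∈ W := by
  intro n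
  induction n with
  | zero =>
    intro M _
    exact zero_mem_of_wide hW hW₀ _
  | succ n ih =>
    intro M hM
    have hTail : ModuleCat.of A (∀ i : Fin n, M i.succ) ∈ W := ih _ (fun i => hM i.succ)
    set f : ModuleCat.of A (M 0) ⟶ ModuleCat.of A (∀ i, M i) :=
      ModuleCat.ofHom (LinearMap.single A (fun i => M i) 0) with hfdef
    set p : ModuleCat.of A (∀ i, M i) ⟶ ModuleCat.of A (∀ i : Fin n, M i.succ) :=
      ModuleCat.ofHom (LinearMap.pi (fun i => LinearMap.proj i.succ)) with hpdef
    refine hW.2.2.2.2 f p ?_ ?_ ?_ (hM 0) hTail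
    · intro x y hxy
      have := congrFun hxy 0
      simpa [f, Pi.single_eq_same] using this
    · intro v
      refine ⟨fun i => Fin.cases 0 v i, ?_⟩
      funext i
      show (Fin.cases 0 v i.succ : ↑(M i.succ)) = v i
      exact Fin.cases_succ (motive := fun j => ↑(M j)) i
    · intro v
      constructor
      · intro hv
        refine ⟨v 0, ?_⟩
        funext i
        rcases Fin.eq_zero_or_eq_succ i with h | ⟨j, rfl⟩
        · subst h
          show Pi.single (M := fun i => ↑(M i)) (0 : Fin (n + 1)) (v 0) 0 = v 0
          exact Pi.single_eq_same _ _
        · have hv0 : v j.succ = 0 := congrFun hv j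
          show Pi.single (M := fun i => ↑(M i)) (0 : Fin (n + 1)) (v 0) j.succ = v j.succ
          rw [hv0]
          exact Pi.single_eq_of_ne (Fin.succ_ne_zero j) _
      · rintro ⟨x, rfl⟩
        funext j
        show Pi.single (M := fun i => ↑(M i)) (0 : Fin (n + 1)) x j.succ = 0
        exact Pi.single_eq_of_ne (Fin.succ_ne_zero j) _

theorem ker_mem_gen_of_wide (K : Type) [Field K] [IsAlgClosed K] (A : Type) [Ring A] [Algebra K A]
    [FiniteDimensional K A]
    (W : Set (ModuleCat A)) (hW : IsWide K A W)
    (W₀ Y : ModuleCat A) (hW₀ : W₀ ∈ W) (hY : Y ∈ gen W) (g : Y ⟶ W₀) :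
    ModuleCat.of A ↥(LinearMap.ker g.hom) ∈ gen W := by
  obtain ⟨n, M, hM, f, hf⟩ := hY
  have hP : ModuleCat.of A (∀ i, M i) ∈ W := pi_mem_of_wide hW hW₀ n M hM
  set h : ModuleCat.of A (∀ i, M i) ⟶ W₀ := f ≫ g with hhdef
  have hker : ModuleCat.of A ↥(LinearMap.ker h.hom) ∈ W := hW.2.2.1 h hP hW₀
  refine ⟨1, fun _ => ModuleCat.of A ↥(LinearMap.ker h.hom), fun _ => hker, ?_, ?_⟩
  · exact ModuleCat.ofHom <| (LinearMap.codRestrict (LinearMap.ker g.hom)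
      (f.hom ∘ₗ (LinearMap.ker h.hom).subtype)
      (fun x => x.2)).comp
      (LinearMap.proj (0 : Fin 1))
  · rintro ⟨y, hy⟩
    obtain ⟨x, hx⟩ := hf y
    have hgy : g y = 0 := hy
    have hxk : x ∈ LinearMap.ker h.hom := by
      show g (f x) = 0
      rw [hx]; exact hgy
    refine ⟨fun _ => ⟨x, hxk⟩, ?_⟩
    apply Subtype.ext
    exact hx
end

section
/- Let A be a finite dimensional algebra over an algebraically closed field K, let T be a functorially finite torsion class in mod(A), and let A →φ T₀ → T₁ → 0 be an exact sequence in which φ is a minimal left T-approximation of A. Then α(T) = T ∩ T₁° ; that is, a module X ∈ T satisfies 'for every morphism g: Y → X with Y ∈ T, ker(g) ∈ T' if and only if Hom_A(T₁, X) = 0. -/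
open CategoryTheory

section Aux

variable {K : Type} [Field K] {A : Type} [Ring A] [Algebra K A]

lemma myFiniteA (M : ModuleCat A) (h : M ∈ modCls K A) : Module.Finite A M := by
  letI : Module A (RestrictScalars K A M) := RestrictScalars.moduleOrig K A M
  haveI := RestrictScalars.isScalarTower K A ↑M
  haveI : Module.Finite A (RestrictScalars K A M) :=
    @Module.Finite.of_restrictScalars_finite K A (RestrictScalars K A M) _ _ _
      (RestrictScalars.module K A M) _ _ _ h
  exact this

lemma myNoethA (M : ModuleCat A) (h : M ∈ modCls K A) : IsNoetherian A M := by
  haveI h'' : @IsNoetherian K (RestrictScalars K A M) _ _ (RestrictScalars.module K A M) :=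
    @IsNoetherian.iff_fg K (RestrictScalars K A M) _ _ (RestrictScalars.module K A M) |>.mpr h
  letI : Module A (RestrictScalars K A M) := RestrictScalars.moduleOrig K A M
  haveI := RestrictScalars.isScalarTower K A ↑M
  have : IsNoetherian A (RestrictScalars K A M) := isNoetherian_of_tower K h''
  exact this

lemma tcPowMem {T : Set (ModuleCat A)} (hQ : QuotClosed T) (hE : ExtClosed T)
    {M : ModuleCat A} (hM : M ∈ T) :
    ∀ n : ℕ, ModuleCat.of A (Fin n → M) ∈ T := by
  intro n
  induction n with
  | zero =>
    refine hQ (M := M) (N := ModuleCat.of A (Fin 0 → M)) 0 ?_ hM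
    intro y; exact ⟨0, Subsingleton.elim _ _⟩
  | succ n ih =>
    classical
    let f : M ⟶ ModuleCat.of A (Fin (n + 1) → ↑M) :=
      ModuleCat.ofHom (LinearMap.single A (fun _ : Fin (n + 1) => ↑M) 0)
    let g : ModuleCat.of A (Fin (n + 1) → ↑M) ⟶ ModuleCat.of A (Fin n → ↑M) :=
      ModuleCat.ofHom (LinearMap.funLeft A (↑M) Fin.succ)
    have hf : Function.Injective f := by
      intro a b hab
      have h0 : (Pi.single (0 : Fin (n+1)) a : Fin (n + 1) → ↑M) 0 =
          (Pi.single (0 : Fin (n+1)) b : Fin (n + 1) → ↑M) 0 := congrFun hab 0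
      rwa [Pi.single_eq_same, Pi.single_eq_same] at h0
    have hg : Function.Surjective g := by
      intro w
      refine ⟨Fin.cons 0 w, funext fun i => ?_⟩
      show (Fin.cons (0 : ↑M) w : Fin (n+1) → ↑M) (Fin.succ i) = w i
      exact Fin.cons_succ (α := fun _ : Fin (n+1) => ↑M) 0 w i
    have hfg : Function.Exact f g := by
      intro v
      constructor
      · intro hv
        refine ⟨v 0, funext fun i => ?_⟩
        show (Pi.single (0 : Fin (n+1)) (v 0) : Fin (n + 1) → ↑M) i = v i
        refine Fin.cases ?_ (fun j => ?_) i
        · exact Pi.single_eq_same _ _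
        · rw [Pi.single_eq_of_ne (Fin.succ_ne_zero j)]
          exact (congrFun hv j).symm
      · rintro ⟨x, rfl⟩
        funext i
        show (Pi.single (0 : Fin (n+1)) x : Fin (n + 1) → ↑M) (Fin.succ i) = 0
        exact Pi.single_eq_of_ne (Fin.succ_ne_zero i) x
    exact hE f g hf hg hfg hM ih

lemma genSurjAux (T₀ : ModuleCat A) (Z : ModuleCat A) [Module.Finite A Z]
    (hgen : ∀ z : Z, ∃ v : T₀ ⟶ Z, z ∈ Set.range v) :
    ∃ (m : ℕ) (p : ModuleCat.of A (Fin m → T₀) ⟶ Z), Function.Surjective p := by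
  classical
  obtain ⟨m, s, hs⟩ := Module.Finite.exists_fin (R := A) (M := Z)
  choose v hv using fun i => hgen (s i)
  let p : (Fin m → T₀) →ₗ[A] Z := ∑ i, (v i).hom.comp (LinearMap.proj i)
  refine ⟨m, ModuleCat.ofHom p, ?_⟩
  have hrange : ∀ i, s i ∈ LinearMap.range p := by
    intro i
    obtain ⟨x, hx⟩ := hv i
    refine ⟨Pi.single i x, ?_⟩
    show (∑ j, (v j).hom.comp (LinearMap.proj j)) (Pi.single i x) = s i
    rw [LinearMap.sum_apply, Finset.sum_eq_single i]
    · simpa using hx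
    · intro j _ hj
      simp [Pi.single_eq_of_ne hj]
    · intro h; exact absurd (Finset.mem_univ i) h
  show Function.Surjective p
  rw [← LinearMap.range_eq_top]
  refine top_unique ?_
  rw [← hs]
  refine Submodule.span_le.mpr ?_
  rintro _ ⟨i, rfl⟩
  exact hrange i

lemma factorThrough {M N X : Type} [AddCommGroup M] [AddCommGroup N] [AddCommGroup X]
    [Module A M] [Module A N] [Module A X] (ψ : M →ₗ[A] N) (hψ : Function.Surjective ψ)
    (u : M →ₗ[A] X) (hle : LinearMap.ker ψ ≤ LinearMap.ker u) :
    ∃ w : N →ₗ[A] X, w.comp ψ = u := by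
  refine ⟨((LinearMap.ker ψ).liftQ u hle).comp
    (ψ.quotKerEquivOfSurjective hψ).symm.toLinearMap, ?_⟩
  ext x
  have h1 : (ψ.quotKerEquivOfSurjective hψ).symm (ψ x) = Submodule.Quotient.mk x := by
    apply (ψ.quotKerEquivOfSurjective hψ).injective
    rw [LinearEquiv.apply_symm_apply]
    simp [LinearMap.quotKerEquivOfSurjective]
  simp [h1]

end Aux

theorem alpha_eq_inter_perp (K : Type) [Field K] [IsAlgClosed K] (A : Type) [Ring A] [Algebra K A]
    [FiniteDimensional K A]
    (T : Set (ModuleCat A))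
    (hT : IsTorsionClass K A T) (hff : FunctFinite K A T)
    (T₀ T₁ : ModuleCat A) (φ : ModuleCat.of A A ⟶ T₀) (ψ : T₀ ⟶ T₁)
    (hφ : IsMinimalLeftApprox T φ) (hψ : Function.Surjective ψ)
    (hexact : Function.Exact φ ψ) :
    alpha T = T ∩ {X : ModuleCat A | ∀ f : T₁ ⟶ X, f = 0} := by
  obtain ⟨hTsub, hIso, hQuot, hExt⟩ := hT
  obtain ⟨⟨hT₀T, happrox⟩, hmin⟩ := hφ
  have hkerψ : LinearMap.ker ψ.hom = LinearMap.range φ.hom := LinearMap.exact_iff.mp hexact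
  have hpow : ∀ n : ℕ, ModuleCat.of A (Fin n → ↑T₀) ∈ T := tcPowMem hQuot hExt hT₀T
  ext X
  simp only [alpha, Set.mem_setOf_eq, Set.mem_inter_iff]
  constructor
  · rintro ⟨hXT, hXa⟩
    refine ⟨hXT, fun f => ?_⟩
    set g : T₀ ⟶ X := ψ ≫ f with hgdef
    have hkT : ModuleCat.of A ↥(LinearMap.ker g.hom) ∈ T := hXa g hT₀T
    have him : ∀ a : A, φ a ∈ LinearMap.ker g.hom := by
      intro a
      refine LinearMap.mem_ker.mpr ?_
      show f (ψ (φ a)) = 0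
      rw [hexact.apply_apply_eq_zero a, map_zero]
    let φ' : ModuleCat.of A A ⟶ ModuleCat.of A ↥(LinearMap.ker g.hom) :=
      ModuleCat.ofHom (LinearMap.codRestrict (LinearMap.ker g.hom) φ.hom him)
    obtain ⟨k, hk⟩ := happrox φ' hkT
    let ι : ModuleCat.of A ↥(LinearMap.ker g.hom) ⟶ T₀ := ModuleCat.ofHom (LinearMap.ker g.hom).subtype
    have hφι : φ ≫ (k ≫ ι) = φ := by
      rw [← Category.assoc, hk]
      exact ModuleCat.hom_ext (LinearMap.ext fun a => rfl)
    haveI := hmin (k ≫ ι) hφι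
    have hbij : Function.Bijective (k ≫ ι) := ConcreteCategory.bijective_of_isIso (k ≫ ι)
    have hmem : ∀ x : ↑T₀, x ∈ LinearMap.ker g.hom := by
      intro x
      obtain ⟨y, hy⟩ := hbij.2 x
      rw [← hy]
      exact Submodule.coe_mem (p := LinearMap.ker g.hom) (k y)
    refine ModuleCat.hom_ext (LinearMap.ext fun t => ?_)
    obtain ⟨s, rfl⟩ := hψ t
    exact LinearMap.mem_ker.mp (hmem s)
  · rintro ⟨hXT, hX0⟩
    refine ⟨hXT, ?_⟩
    intro Y g hYT
    haveI : Module.Finite A ↑Y := myFiniteA (K := K) Y (hTsub hYT)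
    haveI hnT₀ : IsNoetherian A ↑T₀ := myNoethA (K := K) T₀ (hTsub hT₀T)
    have hφ1 : ∀ (Z : ModuleCat A), Z ∈ T → ∀ z : ↑Z,
        ∃ v : T₀ ⟶ Z, ∀ a : A, v (φ a) = a • z := by
      intro Z hZ z
      let u0 : A →ₗ[A] ↑Z :=
        { toFun := fun a => a • z
          map_add' := fun a b => add_smul a b z
          map_smul' := fun a b => mul_smul a b z }
      let u : ModuleCat.of A A ⟶ Z := ModuleCat.ofHom u0
      obtain ⟨v, hv⟩ := happrox u hZ
      refine ⟨v, fun a => ?_⟩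
      exact congrArg (fun m : ModuleCat.of A A ⟶ Z => m a) hv
    obtain ⟨n, p, hp⟩ := genSurjAux T₀ Y fun z =>
      (hφ1 Y hYT z).imp fun v hv => ⟨φ (1:A), by rw [hv (1:A), one_smul]⟩
    set h : ModuleCat.of A (Fin n → ↑T₀) ⟶ X := p ≫ g with hhdef
    haveI hnpi : IsNoetherian A ↑(ModuleCat.of A (Fin n → ↑T₀)) :=
      (inferInstance : IsNoetherian A (Fin n → ↑T₀))
    haveI hfink : Module.Finite A ↥(LinearMap.ker h.hom) :=
      Module.Finite.iff_fg.mpr (IsNoetherian.noetherian _)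
    haveI : Module.Finite A ↑(ModuleCat.of A ↥(LinearMap.ker h.hom)) := hfink
    have hgenK : ∀ z : ↥(LinearMap.ker h.hom),
        ∃ v : T₀ ⟶ ModuleCat.of A ↥(LinearMap.ker h.hom), z ∈ Set.range v := by
      intro z
      obtain ⟨v, hv1⟩ := hφ1 (ModuleCat.of A (Fin n → ↑T₀)) (hpow n) z.1
      have hker' : LinearMap.ker ψ.hom ≤ LinearMap.ker (v ≫ h).hom := by
        rw [hkerψ]
        rintro x ⟨a, rfl⟩
        refine LinearMap.mem_ker.mpr ?_
        show h (v (φ a)) = 0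
        rw [hv1 a, map_smul, LinearMap.mem_ker.mp z.2, smul_zero]
      obtain ⟨w, hw⟩ := factorThrough (A := A) ψ.hom hψ (v ≫ h).hom hker'
      have hw0 : w = 0 := congrArg ModuleCat.Hom.hom (hX0 (ModuleCat.ofHom w))
      have hv0 : ∀ t : ↑T₀, v t ∈ LinearMap.ker h.hom := by
        intro t
        refine LinearMap.mem_ker.mpr ?_
        have h2 : w (ψ t) = h (v t) := LinearMap.congr_fun hw t
        rw [← h2, hw0]
        rfl
      refine ⟨ModuleCat.ofHom (LinearMap.codRestrict (LinearMap.ker h.hom) v.hom hv0), ⟨φ (1:A), Subtype.ext ?_⟩⟩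
      show v (φ (1:A)) = z.1
      rw [hv1 (1:A), one_smul]
    obtain ⟨m, q, hq⟩ := genSurjAux T₀ (ModuleCat.of A ↥(LinearMap.ker h.hom)) hgenK
    have hKT : ModuleCat.of A ↥(LinearMap.ker h.hom) ∈ T := hQuot q hq (hpow m)
    have hpk : ∀ z : ↥(LinearMap.ker h.hom),
        p z.1 ∈ LinearMap.ker g.hom :=
      fun z => LinearMap.mem_ker.mpr (LinearMap.mem_ker.mp z.2)
    let r : ModuleCat.of A ↥(LinearMap.ker h.hom) ⟶ ModuleCat.of A ↥(LinearMap.ker g.hom) :=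
      ModuleCat.ofHom (LinearMap.codRestrict (LinearMap.ker g.hom)
        (p.hom.comp (LinearMap.ker h.hom).subtype) (fun z => hpk z))
    have hr : Function.Surjective r := by
      rintro ⟨y, hy⟩
      obtain ⟨x, hx⟩ := hp y
      have hxk : x ∈ LinearMap.ker h.hom := by
        refine LinearMap.mem_ker.mpr ?_
        show g (p x) = 0
        rw [hx]
        exact LinearMap.mem_ker.mp hy
      exact ⟨⟨x, hxk⟩, Subtype.ext hx⟩
    exact hQuot r hr hKT
end
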